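/- Mixed-norm bound for the trilinear form in three dimensions: There exists a universal constant C > 0 such that for all continuously differentiable compactly supported vector fields u, v, w : ℝ³ → ℝ³, one has |b*(u,v,w)| ≤ C · ‖u‖_{L²} · (‖Dv‖_{L³} + ‖v‖_{L∞}) · ‖Dw‖_{L²}. -/

import Mathlib

open MeasureTheory
open scoped RealInnerProductSpace ENNReal

/-- The convective term `u·∇v`, i.e. `x ↦ Dv(x)(u(x))`. -/
noncomputable def convTerm {d : ℕ}
    (u v : EuclideanSpace ℝ (Fin d) → EuclideanSpace ℝ (Fin d)) :
    EuclideanSpace ℝ (Fin d) → EuclideanSpace ℝ (Fin d) :=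
  fun x => fderiv ℝ v x (u x)

/-- The L² inner product `(f, g) = ∫ f(x)·g(x) dx` of two vector fields. -/
noncomputable def l2inner {d : ℕ}
    (f g : EuclideanSpace ℝ (Fin d) → EuclideanSpace ℝ (Fin d)) : ℝ :=
  ∫ x, ⟪f x, g x⟫

/-- The skew-symmetric trilinear form `b*(u,v,w) = ½(u·∇v, w) − ½(u·∇w, v)`. -/
noncomputable def bstar {d : ℕ}
    (u v w : EuclideanSpace ℝ (Fin d) → EuclideanSpace ℝ (Fin d)) : ℝ :=
  (1 / 2) * l2inner (convTerm u v) w - (1 / 2) * l2inner (convTerm u w) v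

/-- The Frobenius norm of the Jacobian matrix of `v` at `x`:
`(∑ i ‖Dv(x) eᵢ‖²)^{1/2} = (∑ i ∑ j (∂vⱼ/∂xᵢ)²)^{1/2}`. -/
noncomputable def frobNorm {d : ℕ}
    (v : EuclideanSpace ℝ (Fin d) → EuclideanSpace ℝ (Fin d))
    (x : EuclideanSpace ℝ (Fin d)) : ℝ :=
  Real.sqrt (∑ i : Fin d, ‖fderiv ℝ v x (EuclideanSpace.single i 1)‖ ^ 2)

/-- `‖Dv‖_{Lᵖ}`: the Lᵖ norm over `ℝ^d` of `x ↦ ‖Dv(x)‖_F`. -/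
noncomputable def gradLp {d : ℕ} (p : ℝ≥0∞)
    (v : EuclideanSpace ℝ (Fin d) → EuclideanSpace ℝ (Fin d)) : ℝ :=
  (eLpNorm (fun x => frobNorm v x) p volume).toReal

lemma frobNorm_nonneg' {d : ℕ} (v : EuclideanSpace ℝ (Fin d) → EuclideanSpace ℝ (Fin d))
    (x : EuclideanSpace ℝ (Fin d)) : 0 ≤ frobNorm v x := Real.sqrt_nonneg _

lemma norm_fderiv_apply_le' {d : ℕ}
    (v : EuclideanSpace ℝ (Fin d) → EuclideanSpace ℝ (Fin d))
    (x y : EuclideanSpace ℝ (Fin d)) :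
    ‖fderiv ℝ v x y‖ ≤ ‖y‖ * frobNorm v x := by
  set A := fderiv ℝ v x
  have hy : y = ∑ i, y i • EuclideanSpace.single i (1:ℝ) := by
    ext j; rw [WithLp.ofLp_sum, Finset.sum_apply]; simp [EuclideanSpace.single_apply]
  calc ‖A y‖ = ‖∑ i, y i • A (EuclideanSpace.single i 1)‖ := by
        conv_lhs => rw [hy]
        rw [map_sum]
        simp [A]
    _ ≤ ∑ i, ‖y i • A (EuclideanSpace.single i 1)‖ := norm_sum_le _ _
    _ = ∑ i, |y i| * ‖A (EuclideanSpace.single i 1)‖ := by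
        simp [norm_smul]
    _ ≤ Real.sqrt (∑ i, |y i| ^ 2) * Real.sqrt (∑ i, ‖A (EuclideanSpace.single i 1)‖ ^ 2) :=
        Real.sum_mul_le_sqrt_mul_sqrt _ _ _
    _ = ‖y‖ * frobNorm v x := by
        rw [EuclideanSpace.norm_eq]
        simp [frobNorm, A]

lemma frobNorm_continuous' {d : ℕ}
    {v : EuclideanSpace ℝ (Fin d) → EuclideanSpace ℝ (Fin d)} (hv : ContDiff ℝ 1 v) :
    Continuous (fun x => frobNorm v x) := by
  have h : Continuous (fderiv ℝ v) := hv.continuous_fderiv one_ne_zero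
  exact Real.continuous_sqrt.comp
    (continuous_finset_sum _ fun i _ => ((h.clm_apply continuous_const).norm.pow 2))

lemma frobNorm_hasCompactSupport' {d : ℕ}
    {v : EuclideanSpace ℝ (Fin d) → EuclideanSpace ℝ (Fin d)} (hv : HasCompactSupport v) :
    HasCompactSupport (fun x => frobNorm v x) := by
  have h : HasCompactSupport (fderiv ℝ v) := hv.fderiv ℝ
  exact h.comp_left (g := fun (A : EuclideanSpace ℝ (Fin d) →L[ℝ] EuclideanSpace ℝ (Fin d)) =>
    Real.sqrt (∑ i : Fin d, ‖A (EuclideanSpace.single i 1)‖ ^ 2)) (by simp)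

lemma abs_integral_le_eLpNorm_one {α : Type*} [MeasurableSpace α] (μ : Measure α) (f : α → ℝ) :
    |∫ x, f x ∂μ| ≤ (eLpNorm f 1 μ).toReal := by
  have h := norm_integral_le_lintegral_norm (μ := μ) f
  rw [Real.norm_eq_abs] at h
  refine h.trans (le_of_eq ?_)
  rw [eLpNorm_one_eq_lintegral_enorm]
  congr 1
  refine lintegral_congr fun x => ?_
  rw [ofReal_norm]

/-- Mixed-norm bound for the trilinear form in three dimensions: there exists a
universal constant `C > 0` such that
`|b*(u,v,w)| ≤ C ‖u‖_{L²} (‖Dv‖_{L³} + ‖v‖_{L∞}) ‖Dw‖_{L²}` for all C¹ compactly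
supported vector fields `u, v, w : ℝ³ → ℝ³`. -/
theorem bstar_mixed_norm_bound_3d :
    ∃ C > 0, ∀ u v w : EuclideanSpace ℝ (Fin 3) → EuclideanSpace ℝ (Fin 3),
      ContDiff ℝ 1 u → ContDiff ℝ 1 v → ContDiff ℝ 1 w →
      HasCompactSupport u → HasCompactSupport v → HasCompactSupport w →
      |bstar u v w| ≤
        C * (eLpNorm u 2 volume).toReal *
          (gradLp 3 v + (eLpNorm v ⊤ volume).toReal) * gradLp 2 w := by
  set SC := MeasureTheory.eLpNormLESNormFDerivOfEqInnerConst
    (volume : Measure (EuclideanSpace ℝ (Fin 3))) 2 with hSC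
  refine ⟨(SC : ℝ) + 1, by positivity, fun u v w hu hv hw h2u h2v h2w => ?_⟩
  have hpq1 : (1:ℝ≥0∞)/1 = 1/2 + 1/2 := by
    rw [ENNReal.div_add_div_same, ENNReal.div_eq_div_iff] <;> norm_num
  have hqr1 : (1:ℝ≥0∞)/2 = 1/3 + 1/6 := by
    rw [show (1:ℝ≥0∞)/3 = 2/6 by rw [ENNReal.div_eq_div_iff] <;> norm_num,
      ENNReal.div_add_div_same]
    rw [ENNReal.div_eq_div_iff] <;> norm_num
  set A := eLpNorm u 2 (volume : Measure (EuclideanSpace ℝ (Fin 3))) with hA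
  set B := eLpNorm (fun x => frobNorm v x) 3 (volume : Measure (EuclideanSpace ℝ (Fin 3))) with hB
  set V := eLpNorm v ⊤ (volume : Measure (EuclideanSpace ℝ (Fin 3))) with hV
  set G := eLpNorm (fun x => frobNorm w x) 2 (volume : Measure (EuclideanSpace ℝ (Fin 3))) with hG
  -- finiteness
  have hAfin : A ≠ ⊤ := (hu.continuous.memLp_of_hasCompactSupport h2u).eLpNorm_lt_top.ne
  have hBfin : B ≠ ⊤ :=
    ((frobNorm_continuous' hv).memLp_of_hasCompactSupport
      (frobNorm_hasCompactSupport' h2v)).eLpNorm_lt_top.ne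
  have hVfin : V ≠ ⊤ := (hv.continuous.memLp_of_hasCompactSupport h2v).eLpNorm_lt_top.ne
  have hGfin : G ≠ ⊤ :=
    ((frobNorm_continuous' hw).memLp_of_hasCompactSupport
      (frobNorm_hasCompactSupport' h2w)).eLpNorm_lt_top.ne
  -- Sobolev: ‖w‖₆ ≤ SC * ‖Dw‖₂ ≤ SC * G
  have hsob : eLpNorm w 6 (volume : Measure (EuclideanSpace ℝ (Fin 3))) ≤ (SC : ℝ≥0∞) * G := by
    have h := MeasureTheory.eLpNorm_le_eLpNorm_fderiv_of_eq_inner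
      (volume : Measure (EuclideanSpace ℝ (Fin 3))) hw h2w (p := 2) (p' := 6)
      (by norm_num) (by simp) (by rw [finrank_euclideanSpace_fin]; norm_num)
    have e6 : ((6 : NNReal) : ℝ≥0∞) = 6 := by norm_cast
    have e2 : ((2 : NNReal) : ℝ≥0∞) = 2 := by norm_cast
    rw [e6, e2] at h
    refine h.trans ?_
    refine mul_le_mul_right ?_ _
    refine eLpNorm_mono fun x => ?_
    rw [Real.norm_eq_abs, abs_of_nonneg (frobNorm_nonneg' w x)]
    exact ContinuousLinearMap.opNorm_le_bound _ (frobNorm_nonneg' w x)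
      (fun y => by rw [mul_comm]; exact norm_fderiv_apply_le' w x y)
  -- generic Hölder chain for a term ⟪Dv(x)(u x), z x⟫ with exponents (2, q, r)
  have chain : ∀ (z : EuclideanSpace ℝ (Fin 3) → EuclideanSpace ℝ (Fin 3)),
      ContDiff ℝ 1 z →
      eLpNorm (fun x => ⟪fderiv ℝ v x (u x), z x⟫) 1
          (volume : Measure (EuclideanSpace ℝ (Fin 3)))
        ≤ eLpNorm ((fun x => ‖u x‖) • ((fun x => frobNorm v x) • z)) 1 volume := by
    intro z hz
    apply eLpNorm_mono
    intro x
    have h1 : |⟪fderiv ℝ v x (u x), z x⟫| ≤ ‖fderiv ℝ v x (u x)‖ * ‖z x‖ :=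
      abs_real_inner_le_norm _ _
    have h3 : ‖((fun x => ‖u x‖) • ((fun x => frobNorm v x) • z)) x‖
        = ‖u x‖ * (frobNorm v x * ‖z x‖) := by
      simp [norm_smul, abs_of_nonneg (frobNorm_nonneg' v x), mul_assoc]
    rw [Real.norm_eq_abs, h3]
    calc |⟪fderiv ℝ v x (u x), z x⟫| ≤ ‖fderiv ℝ v x (u x)‖ * ‖z x‖ := h1
      _ ≤ (‖u x‖ * frobNorm v x) * ‖z x‖ :=
          mul_le_mul_of_nonneg_right (norm_fderiv_apply_le' v x (u x)) (norm_nonneg _)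
      _ = ‖u x‖ * (frobNorm v x * ‖z x‖) := by ring
  -- first term
  have hT1 : eLpNorm (fun x => ⟪fderiv ℝ v x (u x), w x⟫) 1
      (volume : Measure (EuclideanSpace ℝ (Fin 3))) ≤ A * (B * ((SC : ℝ≥0∞) * G)) := by
    refine (chain w hw).trans ?_
    have step1 := eLpNorm_smul_le_mul_eLpNorm
      (μ := (volume : Measure (EuclideanSpace ℝ (Fin 3)))) (p := 2) (q := 2) (r := 1)
      (f := (fun x => frobNorm v x) • w) (φ := fun x => ‖u x‖)
      (((frobNorm_continuous' hv).smul hw.continuous).aestronglyMeasurable)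
      (hu.continuous.norm.aestronglyMeasurable) (hpqr := ⟨by simpa only [one_div] using hpq1.symm⟩)
    refine step1.trans ?_
    rw [eLpNorm_norm]
    refine mul_le_mul_right ?_ _
    have step2 := eLpNorm_smul_le_mul_eLpNorm
      (μ := (volume : Measure (EuclideanSpace ℝ (Fin 3)))) (p := 3) (q := 6) (r := 2)
      hw.continuous.aestronglyMeasurable (frobNorm_continuous' hv).aestronglyMeasurable (hpqr := ⟨by simpa only [one_div] using hqr1.symm⟩)
    exact step2.trans (mul_le_mul_right hsob _)
  -- second term: ⟪Dw(x)(u x), v x⟫, bound by A * (G * V)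
  have chain2 : eLpNorm (fun x => ⟪fderiv ℝ w x (u x), v x⟫) 1
      (volume : Measure (EuclideanSpace ℝ (Fin 3)))
      ≤ eLpNorm ((fun x => ‖u x‖) • ((fun x => frobNorm w x) • v)) 1 volume := by
    apply eLpNorm_mono
    intro x
    have h1 : |⟪fderiv ℝ w x (u x), v x⟫| ≤ ‖fderiv ℝ w x (u x)‖ * ‖v x‖ :=
      abs_real_inner_le_norm _ _
    have h3 : ‖((fun x => ‖u x‖) • ((fun x => frobNorm w x) • v)) x‖
        = ‖u x‖ * (frobNorm w x * ‖v x‖) := by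
      simp [norm_smul, abs_of_nonneg (frobNorm_nonneg' w x), mul_assoc]
    rw [Real.norm_eq_abs, h3]
    calc |⟪fderiv ℝ w x (u x), v x⟫| ≤ ‖fderiv ℝ w x (u x)‖ * ‖v x‖ := h1
      _ ≤ (‖u x‖ * frobNorm w x) * ‖v x‖ :=
          mul_le_mul_of_nonneg_right (norm_fderiv_apply_le' w x (u x)) (norm_nonneg _)
      _ = ‖u x‖ * (frobNorm w x * ‖v x‖) := by ring
  have hT2 : eLpNorm (fun x => ⟪fderiv ℝ w x (u x), v x⟫) 1
      (volume : Measure (EuclideanSpace ℝ (Fin 3))) ≤ A * (G * V) := by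
    refine chain2.trans ?_
    have step1 := eLpNorm_smul_le_mul_eLpNorm
      (μ := (volume : Measure (EuclideanSpace ℝ (Fin 3)))) (p := 2) (q := 2) (r := 1)
      (f := (fun x => frobNorm w x) • v) (φ := fun x => ‖u x‖)
      (((frobNorm_continuous' hw).smul hv.continuous).aestronglyMeasurable)
      (hu.continuous.norm.aestronglyMeasurable) (hpqr := ⟨by simpa only [one_div] using hpq1.symm⟩)
    refine step1.trans ?_
    rw [eLpNorm_norm]
    refine mul_le_mul_right ?_ _
    exact eLpNorm_smul_le_eLpNorm_mul_eLpNorm_top 2 v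
      (frobNorm_continuous' hw).aestronglyMeasurable
  -- pass to real numbers
  have hfin1 : A * (B * ((SC : ℝ≥0∞) * G)) ≠ ⊤ :=
    ENNReal.mul_ne_top hAfin (ENNReal.mul_ne_top hBfin
      (ENNReal.mul_ne_top ENNReal.coe_ne_top hGfin))
  have hfin2 : A * (G * V) ≠ ⊤ :=
    ENNReal.mul_ne_top hAfin (ENNReal.mul_ne_top hGfin hVfin)
  have hb1 : |l2inner (convTerm u v) w| ≤ (A * (B * ((SC : ℝ≥0∞) * G))).toReal := by
    refine (abs_integral_le_eLpNorm_one _ _).trans (ENNReal.toReal_mono hfin1 hT1)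
  have hb2 : |l2inner (convTerm u w) v| ≤ (A * (G * V)).toReal := by
    refine (abs_integral_le_eLpNorm_one _ _).trans (ENNReal.toReal_mono hfin2 hT2)
  set a := A.toReal
  set b := B.toReal
  set vi := V.toReal
  set g := G.toReal
  set sc := (SC : ℝ)
  have ht1 : (A * (B * ((SC : ℝ≥0∞) * G))).toReal = a * (b * (sc * g)) := by
    rw [ENNReal.toReal_mul, ENNReal.toReal_mul, ENNReal.toReal_mul, ENNReal.coe_toReal]
  have ht2 : (A * (G * V)).toReal = a * (g * vi) := by
    rw [ENNReal.toReal_mul, ENNReal.toReal_mul]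
  rw [ht1] at hb1
  rw [ht2] at hb2
  have hgrad3 : gradLp 3 v = b := rfl
  have hgrad2 : gradLp 2 w = g := rfl
  have ha : 0 ≤ a := ENNReal.toReal_nonneg
  have hbn : 0 ≤ b := ENNReal.toReal_nonneg
  have hvin : 0 ≤ vi := ENNReal.toReal_nonneg
  have hgn : 0 ≤ g := ENNReal.toReal_nonneg
  have hscn : 0 ≤ sc := NNReal.coe_nonneg _
  have habs : |bstar u v w| ≤
      (1/2) * |l2inner (convTerm u v) w| + (1/2) * |l2inner (convTerm u w) v| := by
    rw [bstar, sub_eq_add_neg]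
    refine (abs_add_le _ _).trans ?_
    rw [abs_neg, abs_mul, abs_mul, abs_of_pos (by norm_num : (0:ℝ) < 1/2)]
  rw [hgrad3, hgrad2]
  have : |bstar u v w| ≤ (1/2) * (a * (b * (sc * g))) + (1/2) * (a * (g * vi)) := by
    refine habs.trans ?_
    have h1 : (1:ℝ)/2 > 0 := by norm_num
    nlinarith [hb1, hb2]
  refine this.trans ?_
  have e1 : 0 ≤ sc * (a * (b * g)) := by positivity
  have e2 : 0 ≤ a * (b * g) := by positivity
  have e3 : 0 ≤ sc * (a * (vi * g)) := by positivity
  have e4 : 0 ≤ a * (vi * g) := by positivity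
  nlinarith [e1, e2, e3, e4]
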